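/- arXiv:1205.0735 — 2 statements merged into one kernel-verified Lean document; each statement's English description precedes it below -/
import Mathlib

section
/- Let L be the operator sending a function f to the derivative of (sec·f), i.e. L(f)(x) = d/dx (sec(x)·f(x)). Then for every natural number n ≥ 0 and every real x with cos(x) ≠ 0, L^n(sec)(x) = ∑_{k=0}^{⌊n/2⌋} n! · C(n+1, 2k+1) · tan(x)^{n−2k} · sec(x)^{n+2k+1}. -/
/-- sec(x) = 1/cos(x). -/
noncomputable def sec (x : ℝ) : ℝ := (Real.cos x)⁻¹

/-- The operator L sending f to the derivative of sec·f. -/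
noncomputable def L (f : ℝ → ℝ) : ℝ → ℝ := deriv (fun x => sec x * f x)

lemma hasDerivAt_sec {x : ℝ} (hx : Real.cos x ≠ 0) :
    HasDerivAt sec (sec x * Real.tan x) x := by
  have h := (Real.hasDerivAt_cos x).inv hx
  refine h.congr_deriv (Eq.symm ?_)
  rw [Real.tan_eq_sin_div_cos]
  simp only [sec]
  field_simp

lemma term_hasDeriv {x : ℝ} (hx : Real.cos x ≠ 0) (c : ℝ) (a b : ℕ) :
    HasDerivAt (fun y => c * Real.tan y ^ a * sec y ^ (b+1))
      (c * ((a : ℝ) * Real.tan x ^ (a-1) * sec x ^ (b+3)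
        + ((b : ℝ)+1) * Real.tan x ^ (a+1) * sec x ^ (b+1))) x := by
  have ht := (Real.hasDerivAt_tan hx).pow a
  have hs := (hasDerivAt_sec hx).pow (b+1)
  have h := (ht.mul hs).const_mul c
  have hf : (fun y => c * Real.tan y ^ a * sec y ^ (b+1))
      = fun y => c * (Real.tan y ^ a * sec y ^ (b+1)) := by funext y; ring
  rw [hf]
  refine h.congr_deriv (Eq.symm ?_)
  rw [show (1 : ℝ) / Real.cos x ^ 2 = sec x ^ 2 by rw [sec, one_div, inv_pow]]
  simp only [Nat.add_sub_cancel, Pi.pow_apply]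
  push_cast
  ring

lemma choose_identity (n j : ℕ) (h1 : 1 ≤ j) (h2 : 2*j ≤ n+1) :
    (n+1) * Nat.choose (n+2) (2*j+1) =
      (n+2*j+2) * Nat.choose (n+1) (2*j+1) + (n+2-2*j) * Nat.choose (n+1) (2*j-1) := by
  obtain ⟨m, hm⟩ : ∃ m, n+1 = 2*j + m := ⟨n+1-2*j, by omega⟩
  have e1 : (n+1).choose (2*j+1) * (2*j+1) = (n+1).choose (2*j) * m := by
    have := Nat.choose_succ_right_eq (n+1) (2*j)
    rwa [show n+1-2*j = m by omega] at this
  have e2 : (n+1).choose (2*j) * (2*j) = (n+1).choose (2*j-1) * (m+1) := by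
    have := Nat.choose_succ_right_eq (n+1) (2*j-1)
    rw [show 2*j-1+1 = 2*j by omega, show n+1-(2*j-1) = m+1 by omega] at this
    exact this
  have e3 : (n+2).choose (2*j+1) = (n+1).choose (2*j) + (n+1).choose (2*j+1) :=
    Nat.choose_succ_succ' (n+1) (2*j)
  rw [e3, show n+2-2*j = m+1 by omega]
  zify at e1 e2 hm ⊢
  linear_combination e2 - e1 + ((n+1).choose (2*j) : ℤ) * hm

lemma key_step (n k : ℕ) (t s : ℝ) (hk : 2*k ≤ n) :
    (n.factorial : ℝ) * ((n+1).choose (2*k+1)) * ((n-2*k : ℕ) : ℝ) * t ^ (n-2*k-1) * s ^ (n+2*k+4)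
    + (n.factorial : ℝ) * ((n+1).choose (2*(k+1)+1)) * (((n+2*(k+1)+1 : ℕ) : ℝ)+1) * t ^ (n-2*(k+1)+1) * s ^ (n+2*(k+1)+2)
    = ((n+1).factorial : ℝ) * ((n+1+1).choose (2*(k+1)+1)) * t ^ (n+1-2*(k+1)) * s ^ (n+1+2*(k+1)+1) := by
  rcases Nat.lt_or_ge (2*k+2) (n+1) with hc | hc
  · have h := choose_identity n (k+1) (by omega) (by omega)
    obtain ⟨m, hm⟩ : ∃ m, n = 2*k+2+m := ⟨n-(2*k+2), by omega⟩
    rw [show n-2*k-1 = m+1 by omega, show n-2*(k+1)+1 = m+1 by omega,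
        show n+1-2*(k+1) = m+1 by omega]
    rw [show 2*(k+1)+1 = 2*k+3 by ring] at h ⊢
    rw [show n+2-2*(k+1) = n-2*k by omega, show 2*(k+1)-1 = 2*k+1 by omega] at h
    rw [show n+2*(k+1)+2 = n+2*k+4 by ring, show n+1+2*(k+1)+1 = n+2*k+4 by ring,
        show n+2*(k+1)+1 = n+2*k+3 by ring, show n+1+1 = n+2 by ring]
    rw [Nat.factorial_succ]
    have h' : ((n:ℝ)+1) * ((n+2).choose (2*k+3))
        = ((n:ℝ)+2*k+4) * ((n+1).choose (2*k+3)) + ((n-2*k : ℕ) : ℝ) * ((n+1).choose (2*k+1)) := by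
      have := congrArg (Nat.cast : ℕ → ℝ) h
      push_cast at this
      linarith [this]
    push_cast
    linear_combination (-(n.factorial : ℝ) * t ^ (m+1) * s ^ (n+2*k+4)) * h'
  · rcases (by omega : n = 2*k ∨ n = 2*k+1) with rfl | rfl
    · have z1 : (2*k+1).choose (2*(k+1)+1) = 0 := Nat.choose_eq_zero_of_lt (by omega)
      have z2 : (2*k+1+1).choose (2*(k+1)+1) = 0 := Nat.choose_eq_zero_of_lt (by omega)
      rw [show 2*k - 2*k = 0 by omega, z1, z2]
      push_cast
      ring
    · have z : (2*k+1+1).choose (2*(k+1)+1) = 0 := Nat.choose_eq_zero_of_lt (by omega)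
      rw [z, show 2*k+1-2*k-1 = 0 by omega, show 2*k+1-2*k = 1 by omega,
          show 2*k+1+1-2*(k+1) = 0 by omega,
          show 2*k+1+1+1 = (2*(k+1)+1)+0 by ring]
      rw [show (2*k+1+1).factorial = (2*k+1+1) * (2*k+1).factorial from Nat.factorial_succ _,
          Nat.choose_succ_self_right]
      rw [show (2*(k+1)+1)+0 = 2*(k+1)+1 by ring, Nat.choose_self]
      push_cast
      ring

lemma key (n : ℕ) (t s : ℝ) :
    ∑ k ∈ Finset.range (n/2+1),
      ((n.factorial : ℝ) * ((n+1).choose (2*k+1)) * ((n-2*k : ℕ) : ℝ) * t ^ (n-2*k-1) * s ^ (n+2*k+4)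
        + (n.factorial : ℝ) * ((n+1).choose (2*k+1)) * (((n+2*k+1 : ℕ) : ℝ)+1) * t ^ (n-2*k+1) * s ^ (n+2*k+2))
    = ∑ j ∈ Finset.range ((n+1)/2+1),
        ((n+1).factorial : ℝ) * ((n+1+1).choose (2*j+1)) * t ^ (n+1-2*j) * s ^ (n+1+2*j+1) := by
  let A : ℕ → ℝ := fun k =>
    (n.factorial : ℝ) * ((n+1).choose (2*k+1)) * ((n-2*k : ℕ) : ℝ) * t ^ (n-2*k-1) * s ^ (n+2*k+4)
  let B : ℕ → ℝ := fun k =>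
    (n.factorial : ℝ) * ((n+1).choose (2*k+1)) * (((n+2*k+1 : ℕ) : ℝ)+1) * t ^ (n-2*k+1) * s ^ (n+2*k+2)
  let G : ℕ → ℝ := fun j =>
    ((n+1).factorial : ℝ) * ((n+1+1).choose (2*j+1)) * t ^ (n+1-2*j) * s ^ (n+1+2*j+1)
  show ∑ k ∈ Finset.range (n/2+1), (A k + B k) = ∑ j ∈ Finset.range ((n+1)/2+1), G j
  have hAz : A (n/2+1) = 0 := by
    have h1 : n - 2*(n/2+1) = 0 := by omega
    simp only [A, h1]
    push_cast
    ring
  have hBz : B (n/2+1) = 0 := by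
    have h2 : (n+1).choose (2*(n/2+1)+1) = 0 := Nat.choose_eq_zero_of_lt (by omega)
    simp only [B, h2]
    push_cast
    ring
  have hGz : ∀ j ∈ Finset.range (n/2+2), j ∉ Finset.range ((n+1)/2+1) → G j = 0 := by
    intro j hj hj'
    simp only [Finset.mem_range] at hj hj'
    have h3 : (n+1+1).choose (2*j+1) = 0 := Nat.choose_eq_zero_of_lt (by omega)
    simp only [G, h3]
    push_cast
    ring
  have hR : ∑ j ∈ Finset.range ((n+1)/2+1), G j = ∑ j ∈ Finset.range (n/2+2), G j :=
    Finset.sum_subset (Finset.range_subset_range.mpr (by omega)) hGz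
  have hL : ∑ k ∈ Finset.range (n/2+1), (A k + B k) = ∑ k ∈ Finset.range (n/2+1+1), (A k + B k) := by
    conv_rhs => rw [Finset.sum_range_succ]
    rw [hAz, hBz, add_zero, add_zero]
  rw [hL, hR, show n/2+2 = n/2+1+1 from rfl]
  rw [Finset.sum_add_distrib]
  rw [Finset.sum_range_succ A (n/2+1), hAz, add_zero]
  rw [Finset.sum_range_succ' B (n/2+1), Finset.sum_range_succ' G (n/2+1)]
  have hG0 : G 0 = B 0 := by
    show ((n+1).factorial : ℝ) * ((n+1+1).choose (2*0+1)) * t ^ (n+1-2*0) * s ^ (n+1+2*0+1)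
        = (n.factorial : ℝ) * ((n+1).choose (2*0+1)) * (((n+2*0+1 : ℕ) : ℝ)+1) * t ^ (n-2*0+1) * s ^ (n+2*0+2)
    rw [show 2*0+1 = 1 from rfl, Nat.choose_one_right, Nat.choose_one_right,
        show n+1-2*0 = n-2*0+1 by omega, show n+1+2*0+1 = n+2*0+2 by omega, Nat.factorial_succ]
    push_cast
    ring
  rw [hG0, ← add_assoc, ← Finset.sum_add_distrib]
  congr 1
  refine Finset.sum_congr rfl fun k hk => ?_
  have hk' : 2*k ≤ n := by
    simp only [Finset.mem_range] at hk
    omega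
  exact key_step n k t s hk'

lemma main_aux (n : ℕ) : ∀ (x : ℝ), Real.cos x ≠ 0 →
    L^[n] sec x = ∑ k ∈ Finset.range (n / 2 + 1),
        (n.factorial : ℝ) * ((n + 1).choose (2 * k + 1)) *
          Real.tan x ^ (n - 2 * k) * sec x ^ (n + 2 * k + 1) := by
  induction n with
  | zero =>
    intro x hx
    simp
  | succ n ih =>
    intro x hx
    have hopen : IsOpen {y : ℝ | Real.cos y ≠ 0} :=
      isOpen_compl_singleton.preimage Real.continuous_cos
    have hmem : {y : ℝ | Real.cos y ≠ 0} ∈ nhds x := hopen.mem_nhds hx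
    rw [Function.iterate_succ_apply']
    show deriv (fun y => sec y * L^[n] sec y) x = _
    have heq : (fun y => sec y * L^[n] sec y) =ᶠ[nhds x]
        (fun y => ∑ k ∈ Finset.range (n/2+1),
          (n.factorial : ℝ) * ((n+1).choose (2*k+1)) * Real.tan y ^ (n-2*k) * sec y ^ ((n+2*k+1)+1)) := by
      filter_upwards [hmem] with y hy
      rw [ih y hy, Finset.mul_sum]
      exact Finset.sum_congr rfl fun k _ => by ring
    rw [heq.deriv_eq]
    have hD : HasDerivAt (fun y => ∑ k ∈ Finset.range (n/2+1),
          (n.factorial : ℝ) * ((n+1).choose (2*k+1)) * Real.tan y ^ (n-2*k) * sec y ^ ((n+2*k+1)+1))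
        (∑ k ∈ Finset.range (n/2+1),
          ((n.factorial : ℝ) * ((n+1).choose (2*k+1))) * (((n-2*k : ℕ) : ℝ) * Real.tan x ^ (n-2*k-1) * sec x ^ ((n+2*k+1)+3)
            + (((n+2*k+1 : ℕ) : ℝ)+1) * Real.tan x ^ ((n-2*k)+1) * sec x ^ ((n+2*k+1)+1))) x :=
      HasDerivAt.fun_sum fun k _ => term_hasDeriv hx _ (n-2*k) (n+2*k+1)
    rw [hD.deriv]
    refine Eq.trans (Finset.sum_congr rfl fun k _ => by push_cast; ring) (key n (Real.tan x) (sec x))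

theorem iterate_L_sec_explicit (n : ℕ) (x : ℝ) (hx : Real.cos x ≠ 0) :
    L^[n] sec x =
      ∑ k ∈ Finset.range (n / 2 + 1),
        (n.factorial : ℝ) * ((n + 1).choose (2 * k + 1)) *
          Real.tan x ^ (n - 2 * k) * sec x ^ (n + 2 * k + 1) := by
  exact main_aux n x hx
end

section
/- Let L be the operator sending a function f to the derivative of (sec·f), i.e. L(f)(x) = d/dx (sec(x)·f(x)). Then for every natural number m ≥ 0 and every real x with cos(x) ≠ 0, L^{2m}(sec)(x) = (2m)! · sec(x) · ∑_{k=0}^{m} C(2m+1, 2k+1) · tan(x)^{2m−2k} · (1 + tan(x)^2)^{m+k}. -/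
lemma key_s14 (n : ℕ) : ∀ (x : ℝ), Real.cos x ≠ 0 →
    L^[n] sec x = (n.factorial : ℝ) * sec x ^ n *
      ((sec x + Real.tan x) ^ (n + 1) + (-1 : ℝ) ^ n * (sec x - Real.tan x) ^ (n + 1)) / 2 := by
  induction n with
  | zero => intro x hx; simp [Nat.factorial]
  | succ n ih =>
    intro x hx
    have hev : (fun y => sec y * (L^[n] sec) y) =ᶠ[nhds x]
        (fun y => (n.factorial : ℝ) / 2 * ((sec y * (sec y + Real.tan y)) ^ (n + 1)
          + (-1 : ℝ) ^ n * (sec y * (sec y - Real.tan y)) ^ (n + 1))) := by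
      have hcos : ∀ᶠ y in nhds x, Real.cos y ≠ 0 :=
        Real.continuous_cos.continuousAt.eventually_ne hx
      filter_upwards [hcos] with y hy
      rw [ih y hy]; simp only [mul_pow]; ring
    have hsec : HasDerivAt sec (Real.tan x * sec x) x := by
      have h := (Real.hasDerivAt_cos x).inv hx
      have e : Real.tan x * sec x = -(-Real.sin x) / Real.cos x ^ 2 := by
        rw [Real.tan_eq_sin_div_cos, sec, neg_neg, pow_two]
        simp [div_eq_mul_inv, mul_inv, mul_comm, mul_assoc, mul_left_comm]
      rw [e]; exact h
    have htan : HasDerivAt Real.tan (sec x ^ 2) x := by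
      have h := Real.hasDerivAt_tan hx
      have e : sec x ^ 2 = 1 / Real.cos x ^ 2 := by rw [sec]; field_simp
      rw [e]; exact h
    have hA : HasDerivAt (fun y => sec y * (sec y + Real.tan y))
        (Real.tan x * sec x * (sec x + Real.tan x)
          + sec x * (Real.tan x * sec x + sec x ^ 2)) x := hsec.mul (hsec.add htan)
    have hB : HasDerivAt (fun y => sec y * (sec y - Real.tan y))
        (Real.tan x * sec x * (sec x - Real.tan x)
          + sec x * (Real.tan x * sec x - sec x ^ 2)) x := hsec.mul (hsec.sub htan)
    have hG : HasDerivAt (fun y => (n.factorial : ℝ) / 2 * ((sec y * (sec y + Real.tan y)) ^ (n + 1)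
          + (-1 : ℝ) ^ n * (sec y * (sec y - Real.tan y)) ^ (n + 1)))
        ((n.factorial : ℝ) / 2 * (((n + 1 : ℕ) : ℝ) * (sec x * (sec x + Real.tan x)) ^ n *
            (Real.tan x * sec x * (sec x + Real.tan x) + sec x * (Real.tan x * sec x + sec x ^ 2))
          + (-1 : ℝ) ^ n * (((n + 1 : ℕ) : ℝ) * (sec x * (sec x - Real.tan x)) ^ n *
            (Real.tan x * sec x * (sec x - Real.tan x) + sec x * (Real.tan x * sec x - sec x ^ 2))))) x := by
      have h1 := hA.pow (n + 1)
      have h2 := (hB.pow (n + 1)).const_mul ((-1 : ℝ) ^ n)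
      simpa using (h1.add h2).const_mul ((n.factorial : ℝ) / 2)
    rw [Function.iterate_succ_apply']
    show deriv (fun y => sec y * (L^[n] sec) y) x = _
    rw [hev.deriv_eq]
    refine hG.deriv.trans ?_
    simp only [mul_pow]
    push_cast [Nat.factorial_succ, pow_succ]
    ring

lemma sum_range_two_mul' (f : ℕ → ℝ) (m : ℕ) :
    ∑ j ∈ Finset.range (2 * m), f j = ∑ k ∈ Finset.range m, (f (2 * k) + f (2 * k + 1)) := by
  induction m with
  | zero => simp
  | succ m ih =>
    have h : 2 * (m + 1) = 2 * m + 1 + 1 := by ring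
    rw [h, Finset.sum_range_succ, Finset.sum_range_succ, ih, Finset.sum_range_succ]
    ring

lemma binom_odd (s t : ℝ) (m : ℕ) :
    (s + t) ^ (2 * m + 1) + (s - t) ^ (2 * m + 1) =
      ∑ k ∈ Finset.range (m + 1),
        2 * ((2 * m + 1).choose (2 * k + 1) : ℝ) * s ^ (2 * k + 1) * t ^ (2 * m - 2 * k) := by
  rw [sub_eq_add_neg, add_pow, add_pow, ← Finset.sum_add_distrib]
  have h : 2 * m + 1 + 1 = 2 * (m + 1) := by ring
  rw [h, sum_range_two_mul']
  refine Finset.sum_congr rfl fun k hk => ?_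
  have hk' : k ≤ m := by simpa [Nat.lt_succ_iff] using hk
  have h1 : 2 * m + 1 - 2 * k = 2 * (m - k) + 1 := by omega
  have h2 : 2 * m + 1 - (2 * k + 1) = 2 * m - 2 * k := by omega
  rw [h1, h2]
  have hodd : (-t) ^ (2 * (m - k) + 1) = -(t ^ (2 * (m - k) + 1)) :=
    Odd.neg_pow ⟨m - k, by ring⟩ t
  have heven : (-t) ^ (2 * m - 2 * k) = t ^ (2 * m - 2 * k) :=
    Even.neg_pow ⟨m - k, by omega⟩ t
  rw [hodd, heven]
  ring

theorem iterate_L_sec_even (m : ℕ) (x : ℝ) (hx : Real.cos x ≠ 0) :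
    L^[2 * m] sec x =
      ((2 * m).factorial : ℝ) * sec x *
        ∑ k ∈ Finset.range (m + 1),
          ((2 * m + 1).choose (2 * k + 1)) *
            Real.tan x ^ (2 * m - 2 * k) * (1 + Real.tan x ^ 2) ^ (m + k) := by
  rw [key_s14 (2 * m) x hx]
  have hneg : (-1 : ℝ) ^ (2 * m) = 1 := by simp [pow_mul]
  rw [hneg, one_mul, binom_odd]
  have hs2 : (1 : ℝ) + Real.tan x ^ 2 = sec x ^ 2 := by
    rw [Real.tan_eq_sin_div_cos, sec, div_pow]
    field_simp
    linarith [Real.sin_sq_add_cos_sq x]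
  rw [hs2, Finset.mul_sum, Finset.mul_sum, Finset.sum_div]
  refine Finset.sum_congr rfl fun k hk => ?_
  ring
end
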